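/- Let b ≥ 2 and r ≥ 1 be integers, and let n be an integer with n ≥ b^r − 1. Then the sum of the base-b digits of Λ_n = lcm(1, 2, …, n) satisfies s_b(Λ_n) ≥ (b−1)·r. -/

import Mathlib

open Finset

private lemma aux_sum_div_pow_le {b : ℕ} (hb : 2 ≤ b) (n K : ℕ) :
    (b - 1) * (∑ i ∈ range K, n / b ^ (i + 1)) + n / b ^ K ≤ n := by
  induction K with
  | zero => simp
  | succ K ih =>
    have hdd : n / b ^ (K + 1) = n / b ^ K / b := by
      rw [pow_succ, Nat.div_div_eq_div_mul]
    have hb0 : 0 < b := by omega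
    have h1 : b * (n / b ^ (K + 1)) ≤ n / b ^ K := by
      rw [hdd]; exact Nat.mul_div_le _ b
    calc (b - 1) * (∑ i ∈ range (K + 1), n / b ^ (i + 1)) + n / b ^ (K + 1)
        = (b - 1) * (∑ i ∈ range K, n / b ^ (i + 1))
            + ((b - 1) * (n / b ^ (K + 1)) + n / b ^ (K + 1)) := by
          rw [sum_range_succ, Nat.mul_add]; ring
      _ = (b - 1) * (∑ i ∈ range K, n / b ^ (i + 1)) + b * (n / b ^ (K + 1)) := by
          congr 1
          rw [← Nat.succ_mul]
          congr 1
          omega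
      _ ≤ (b - 1) * (∑ i ∈ range K, n / b ^ (i + 1)) + n / b ^ K :=
          Nat.add_le_add_left h1 _
      _ ≤ n := ih

private lemma aux_sum_formula {b : ℕ} (hb : 2 ≤ b) (n K : ℕ)
    (hK : Nat.log b n < K) :
    (b - 1) * (∑ i ∈ range K, n / b ^ (i + 1)) = n - (Nat.digits b n).sum := by
  have h1 : 1 < b := hb
  rw [← Nat.sub_one_mul_sum_log_div_pow_eq_sub_sum_digits n]
  congr 1
  refine (Finset.sum_subset (Finset.range_subset_range.mpr hK) fun i _ hi => ?_).symm
  rw [Finset.mem_range, not_lt] at hi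
  exact Nat.div_eq_of_lt (Nat.lt_pow_of_log_lt h1 (by omega))

private lemma aux_digit_sum_le {b : ℕ} (hb : 2 ≤ b) (n : ℕ) :
    (Nat.digits b n).sum ≤ n := by
  conv_rhs => rw [← Nat.ofDigits_digits b n]
  exact Nat.sum_le_ofDigits _ (by omega)

private lemma aux_subadd {b : ℕ} (hb : 2 ≤ b) (x y : ℕ) :
    (Nat.digits b (x + y)).sum ≤ (Nat.digits b x).sum + (Nat.digits b y).sum := by
  set K := Nat.log b (x + y) + 1 with hK
  have hx : Nat.log b x < K := by
    have := Nat.log_mono_right (b := b) (Nat.le_add_right x y); omega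
  have hy : Nat.log b y < K := by
    have := Nat.log_mono_right (b := b) (Nat.le_add_left y x); omega
  have hxy : Nat.log b (x + y) < K := by omega
  have fx := aux_sum_formula hb x K hx
  have fy := aux_sum_formula hb y K hy
  have fxy := aux_sum_formula hb (x + y) K hxy
  have lx := (Nat.le_add_right _ _).trans (aux_sum_div_pow_le hb x K)
  have ly := (Nat.le_add_right _ _).trans (aux_sum_div_pow_le hb y K)
  have hsuper : ∀ i ∈ range K,
      x / b ^ (i + 1) + y / b ^ (i + 1) ≤ (x + y) / b ^ (i + 1) := by
    intro i _
    have hp : 0 < b ^ (i + 1) := Nat.pow_pos (by omega)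
    rw [Nat.le_div_iff_mul_le hp, Nat.add_mul]
    exact Nat.add_le_add (Nat.div_mul_le_self _ _) (Nat.div_mul_le_self _ _)
  have hS : ∑ i ∈ range K, x / b ^ (i + 1) + ∑ i ∈ range K, y / b ^ (i + 1)
      ≤ ∑ i ∈ range K, (x + y) / b ^ (i + 1) := by
    rw [← Finset.sum_add_distrib]
    exact Finset.sum_le_sum hsuper
  have hmul : (b - 1) * (∑ i ∈ range K, x / b ^ (i + 1))
      + (b - 1) * (∑ i ∈ range K, y / b ^ (i + 1))
      ≤ (b - 1) * (∑ i ∈ range K, (x + y) / b ^ (i + 1)) := by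
    rw [← Nat.mul_add]
    exact Nat.mul_le_mul_left _ hS
  have hsx := aux_digit_sum_le hb x
  have hsy := aux_digit_sum_le hb y
  have hsxy := aux_digit_sum_le hb (x + y)
  omega

private lemma aux_split {b : ℕ} (hb : 2 ≤ b) (r m : ℕ) :
    (Nat.digits b m).sum =
      (Nat.digits b (m % b ^ r)).sum + (Nat.digits b (m / b ^ r)).sum := by
  have h1 : 1 < b := hb
  rcases Nat.eq_zero_or_pos (m / b ^ r) with hq | hq
  · have hlt : m < b ^ r := by
      by_contra h
      push_neg at h
      have := Nat.one_le_div_iff (show 0 < b ^ r from Nat.pow_pos (by omega)) |>.mpr h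
      omega
    rw [hq, Nat.mod_eq_of_lt hlt]; simp
  · have hlen : (Nat.digits b (m % b ^ r)).length ≤ r := by
      rcases Nat.eq_zero_or_pos (m % b ^ r) with h0 | h0
      · simp [h0]
      · rw [Nat.digits_len b _ h1 (by omega)]
        have : m % b ^ r < b ^ r := Nat.mod_lt _ (Nat.pow_pos (by omega))
        have := Nat.log_lt_of_lt_pow (by omega) this
        omega
    have key := Nat.digits_append_zeroes_append_digits (b := b)
      (k := r - (Nat.digits b (m % b ^ r)).length) (m := m / b ^ r)
      (n := m % b ^ r) h1 hq
    have hexp : (Nat.digits b (m % b ^ r)).length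
        + (r - (Nat.digits b (m % b ^ r)).length) = r := by omega
    rw [hexp] at key
    have hm : m % b ^ r + b ^ r * (m / b ^ r) = m := by
      have := Nat.div_add_mod m (b ^ r); omega
    rw [hm] at key
    rw [← key]
    simp

private lemma aux_key {b : ℕ} (hb : 2 ≤ b) (r : ℕ) (hr : 1 ≤ r) :
    ∀ m : ℕ, 0 < m → (b ^ r - 1) ∣ m → (b - 1) * r ≤ (Nat.digits b m).sum := by
  have h1 : 1 < b := hb
  have hbr : 2 ≤ b ^ r := by
    calc 2 ≤ b := hb
    _ = b ^ 1 := (pow_one b).symm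
    _ ≤ b ^ r := Nat.pow_le_pow_right (by omega) hr
  intro m
  induction m using Nat.strong_induction_on with
  | _ m ih =>
    intro hm hd
    by_cases hsmall : m < b ^ r
    · -- then m = b^r - 1
      obtain ⟨k, hk⟩ := hd
      have hk1 : k = 1 := by
        rcases k with _ | _ | k
        · simp at hk; omega
        · rfl
        · exfalso
          have h2 : (b ^ r - 1) * 2 ≤ (b ^ r - 1) * (k + 1 + 1) :=
            Nat.mul_le_mul_left _ (by omega)
          omega
      have hm' : m = b ^ r - 1 := by rw [hk, hk1, mul_one]
      subst hm'
      -- digits of b^r - 1 : replicate r (b-1)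
      have hdig : ∀ s : ℕ, Nat.digits b (b ^ s - 1) = List.replicate s (b - 1) := by
        intro s
        induction s with
        | zero => simp
        | succ s ihs =>
          have hpos : 0 < b ^ (s + 1) - 1 := by
            have : 2 ≤ b ^ (s + 1) := by
              calc 2 ≤ b := hb
              _ = b ^ 1 := (pow_one b).symm
              _ ≤ b ^ (s + 1) := Nat.pow_le_pow_right (by omega) (by omega)
            omega
          have hbs : 1 ≤ b ^ s := Nat.one_le_pow _ _ (by omega)
          have heq : b ^ (s + 1) - 1 = (b - 1) + b * (b ^ s - 1) := by
            have : b ^ (s + 1) = b * b ^ s := by ring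
            rw [this]
            have := Nat.mul_le_mul_left b hbs
            rw [Nat.mul_sub_one] at *
            omega
          rw [Nat.digits_def' h1 hpos, heq]
          have hblt : b - 1 < b := by omega
          rw [Nat.add_mul_mod_self_left, Nat.add_mul_div_left _ _ (by omega : 0 < b),
            Nat.mod_eq_of_lt hblt, Nat.div_eq_of_lt hblt, Nat.zero_add, ihs,
            List.replicate_succ]
      rw [hdig r]
      simp [Nat.mul_comm]
    · push_neg at hsmall
      obtain ⟨q, hq⟩ : ∃ q, m / b ^ r = q := ⟨_, rfl⟩
      obtain ⟨s0, hs0⟩ : ∃ s0, m % b ^ r = s0 := ⟨_, rfl⟩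
      have hq1 : 1 ≤ q := hq ▸ (Nat.one_le_div_iff (by omega) |>.mpr hsmall)
      have hmod := Nat.div_add_mod m (b ^ r)
      rw [hq, hs0] at hmod
      have hs0lt : s0 < b ^ r := hs0 ▸ Nat.mod_lt _ (Nat.pow_pos (by omega))
      have hd' : (b ^ r - 1) ∣ (q + s0) := by
        obtain ⟨k, hk⟩ := hd
        have hsplit : b ^ r * q = (b ^ r - 1) * q + q := by
          have h2 : (b ^ r - 1) * q + 1 * q = ((b ^ r - 1) + 1) * q := (Nat.add_mul _ _ _).symm
          rw [one_mul] at h2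
          rw [h2]
          congr 1
          omega
        have hmq : (b ^ r - 1) * k = (b ^ r - 1) * q + (q + s0) := by omega
        have hkq : q ≤ k := by
          by_contra h
          push_neg at h
          have : (b ^ r - 1) * k ≤ (b ^ r - 1) * q :=
            Nat.mul_le_mul le_rfl (le_of_lt h)
          omega
        refine ⟨k - q, ?_⟩
        rw [Nat.mul_sub]
        omega
      have hlt : q + s0 < m := by
        have h2 : 2 * q ≤ b ^ r * q := Nat.mul_le_mul_right _ hbr
        omega
      have hpos' : 0 < q + s0 := by omega
      have := ih (q + s0) hlt hpos' hd'
      calc (b - 1) * r ≤ (Nat.digits b (q + s0)).sum := this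
        _ ≤ (Nat.digits b q).sum + (Nat.digits b s0).sum := aux_subadd hb q s0
        _ = (Nat.digits b s0).sum + (Nat.digits b q).sum := Nat.add_comm _ _
        _ = (Nat.digits b m).sum := by
              have := aux_split hb r m
              rw [hq, hs0] at this
              omega

theorem stmt_9 (b r n : ℕ) (hb : 2 ≤ b) (hr : 1 ≤ r)
    (hn : n ≥ b ^ r - 1) :
    (Nat.digits b ((Finset.Icc 1 n).lcm id)).sum ≥ (b - 1) * r := by
  have hbr : 2 ≤ b ^ r := by
    calc 2 ≤ b := hb
    _ = b ^ 1 := (pow_one b).symm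
    _ ≤ b ^ r := Nat.pow_le_pow_right (by omega) hr
  have hmem : b ^ r - 1 ∈ Finset.Icc 1 n := by
    rw [Finset.mem_Icc]; omega
  have hdvd : (b ^ r - 1) ∣ (Finset.Icc 1 n).lcm id :=
    Finset.dvd_lcm (f := id) hmem
  have hpos : 0 < (Finset.Icc 1 n).lcm id := by
    refine Nat.pos_of_ne_zero fun h0 => ?_
    rw [Finset.lcm_eq_zero_iff] at h0
    have h := h0
    simp only [Set.mem_image, Finset.mem_coe, Finset.mem_Icc, id] at h
    obtain ⟨x, hx, hx0⟩ := h
    omega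
  exact aux_key hb r hr _ hpos hdvd
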